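/- (Extremal property of the spectral radius) Let A be an n×n max-plus matrix with spectral radius λ = max_{1≤m≤n} (1/m) · tr(A^m) (with tr and powers in max-plus arithmetic, and (1/m)· denoting division of the real trace by m). Then for every regular vector x ∈ ℝ^n, the scalar x⁻ ⊗ A ⊗ x = max_{i,j} (-x_i + a_{ij} + x_j) satisfies x⁻ ⊗ A ⊗ x ≥ λ, and the value λ is attained for some regular x (provided λ is finite). -/

import Mathlib

noncomputable section

/-- Max-plus carrier: ℝ ∪ {-∞}. Addition ⊕ is `max`, multiplication ⊗ is `+`
(with ⊥ = -∞ absorbing), zero is ⊥ and unit is `(0 : ℝ)`. -/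
abbrev MP := WithBot ℝ

/-- Multiplicative conjugate: negate a finite value, send -∞ to -∞. -/
def mpInv (a : MP) : MP := a.map (fun t => -t)

/-- Max-plus matrix product. -/
def mpMulM {l m n : ℕ} (A : Fin l → Fin m → MP) (B : Fin m → Fin n → MP) :
    Fin l → Fin n → MP := fun i j => Finset.univ.sup fun k => A i k + B k j

/-- Max-plus matrix-vector product. -/
def mpMulV {m n : ℕ} (A : Fin m → Fin n → MP) (x : Fin n → MP) : Fin m → MP :=
  fun i => Finset.univ.sup fun j => A i j + x j

/-- Max-plus identity matrix. -/
def mpId {n : ℕ} : Fin n → Fin n → MP := fun i j => if i = j then ((0:ℝ) : MP) else ⊥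

/-- Max-plus matrix power. -/
def mpPow {n : ℕ} (A : Fin n → Fin n → MP) : ℕ → (Fin n → Fin n → MP)
  | 0 => mpId
  | k+1 => mpMulM (mpPow A k) A

/-- Max-plus trace. -/
def mpTr {n : ℕ} (A : Fin n → Fin n → MP) : MP := Finset.univ.sup fun i => A i i

/-- Tr(A) = tr A ⊕ tr A² ⊕ ⋯ ⊕ tr Aⁿ. -/
def mpTR {n : ℕ} (A : Fin n → Fin n → MP) : MP :=
  (Finset.Icc 1 n).sup fun m => mpTr (mpPow A m)

/-- Kleene star A* = I ⊕ A ⊕ ⋯ ⊕ A^{n-1}. -/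
def mpStar {n : ℕ} (A : Fin n → Fin n → MP) : Fin n → Fin n → MP :=
  fun i j => (Finset.range n).sup fun k => mpPow A k i j

/-- Max-plus spectral radius λ = max_{1≤m≤n} tr(A^m)^{1/m}. -/
def mpLam {n : ℕ} (A : Fin n → Fin n → MP) : MP :=
  (Finset.Icc 1 n).sup fun m => (mpTr (mpPow A m)).map (fun t => t / (m : ℝ))

/-- The alternating product B^{i₀} A B^{i₁} A ⋯ A B^{iₖ}. -/
def mpChain {n : ℕ} (A B : Fin n → Fin n → MP) : (k : ℕ) → (Fin (k+1) → ℕ) → (Fin n → Fin n → MP)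
  | 0, i => mpPow B (i 0)
  | (k+1), i => mpMulM (mpChain A B k (fun j => i j.castSucc)) (mpMulM A (mpPow B (i (Fin.last (k+1)))))

/-! ### Auxiliary lemmas -/

lemma mp_add_sup {ι : Type*} (s : Finset ι) (c : MP) (f : ι → MP) :
    c + s.sup f = s.sup fun k => c + f k :=
  Finset.comp_sup_eq_sup_comp (fun y => c + y) (fun x y => by
    rcases le_total x y with h | h
    · rw [sup_eq_right.2 h, sup_eq_right.2 (add_le_add_right h c)]
    · rw [sup_eq_left.2 h, sup_eq_left.2 (add_le_add_right h c)]) (WithBot.add_bot c)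

lemma mp_sup_add {ι : Type*} (s : Finset ι) (c : MP) (f : ι → MP) :
    s.sup f + c = s.sup fun k => f k + c :=
  Finset.comp_sup_eq_sup_comp (fun y => y + c) (fun x y => by
    rcases le_total x y with h | h
    · rw [sup_eq_right.2 h, sup_eq_right.2 (add_le_add_left h c)]
    · rw [sup_eq_left.2 h, sup_eq_left.2 (add_le_add_left h c)]) (WithBot.bot_add c)

lemma mp_shift (b : ℝ) (c d : MP) : c + (b : MP) ≤ d ↔ c ≤ d + ((-b : ℝ) : MP) := by
  induction c using WithBot.recBotCoe with
  | bot => simp [WithBot.bot_add]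
  | coe r =>
    induction d using WithBot.recBotCoe with
    | bot => simp [WithBot.add_bot, ← WithBot.coe_add]
    | coe e =>
      rw [← WithBot.coe_add, ← WithBot.coe_add, WithBot.coe_le_coe, WithBot.coe_le_coe]
      constructor <;> intro h <;> linarith

lemma mp_cases (c : MP) : c = ⊥ ∨ ∃ r : ℝ, c = (r : MP) := by
  induction c using WithBot.recBotCoe with
  | bot => exact Or.inl rfl
  | coe r => exact Or.inr ⟨r, rfl⟩

lemma mpMulM_id {m n : ℕ} (X : Fin m → Fin n → MP) : mpMulM X mpId = X := by
  funext i j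
  apply le_antisymm
  · apply Finset.sup_le
    intro k _
    by_cases h : k = j
    · subst h; simp [mpId]
    · simp [mpId, h, WithBot.add_bot]
  · have := Finset.le_sup (f := fun k => X i k + mpId k j) (Finset.mem_univ j)
    refine le_trans ?_ this; simp [mpId]

lemma id_mpMulM {m n : ℕ} (X : Fin m → Fin n → MP) : mpMulM mpId X = X := by
  funext i j
  apply le_antisymm
  · apply Finset.sup_le
    intro k _
    by_cases h : i = k
    · subst h; simp [mpId]
    · simp [mpId, h, WithBot.bot_add]
  · have := Finset.le_sup (f := fun k => mpId i k + X k j) (Finset.mem_univ i)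
    refine le_trans ?_ this; simp [mpId]

lemma mpMulM_assoc {n₁ n₂ n₃ n₄ : ℕ} (X : Fin n₁ → Fin n₂ → MP) (Y : Fin n₂ → Fin n₃ → MP)
    (Z : Fin n₃ → Fin n₄ → MP) : mpMulM (mpMulM X Y) Z = mpMulM X (mpMulM Y Z) := by
  funext i j
  show Finset.univ.sup (fun k => (Finset.univ.sup fun p => X i p + Y p k) + Z k j)
      = Finset.univ.sup fun p => X i p + Finset.univ.sup fun k => Y p k + Z k j
  calc Finset.univ.sup (fun k => (Finset.univ.sup fun p => X i p + Y p k) + Z k j)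
      = Finset.univ.sup fun k => Finset.univ.sup fun p => X i p + Y p k + Z k j := by
        apply Finset.sup_congr rfl; intro k _; exact mp_sup_add _ _ _
    _ = Finset.univ.sup fun p => Finset.univ.sup fun k => X i p + Y p k + Z k j :=
        Finset.sup_comm _ _ _
    _ = Finset.univ.sup fun p => X i p + Finset.univ.sup fun k => Y p k + Z k j := by
        apply Finset.sup_congr rfl; intro p _
        rw [mp_add_sup]
        apply Finset.sup_congr rfl; intro k _
        rw [add_assoc]

lemma mpPow_add {n : ℕ} (A : Fin n → Fin n → MP) (a b : ℕ) :
    mpPow A (a + b) = mpMulM (mpPow A a) (mpPow A b) := by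
  induction b with
  | zero => simp [mpPow, mpMulM_id]
  | succ b ih =>
    show mpPow A ((a + b) + 1) = _
    rw [show mpPow A ((a+b)+1) = mpMulM (mpPow A (a+b)) A from rfl, ih, mpMulM_assoc]
    rfl

/-- Part 1: the spectral radius is a lower bound. -/
lemma mp_part1 {n : ℕ} (A : Fin n → Fin n → MP) (x : Fin n → ℝ) :
    mpLam A ≤ Finset.univ.sup fun i => Finset.univ.sup fun j =>
        ((-(x i) : ℝ) : MP) + A i j + (x j : MP) := by
  have hterm : ∀ i j, ((-(x i) : ℝ) : MP) + A i j + (x j : MP)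
      ≤ Finset.univ.sup fun i => Finset.univ.sup fun j =>
        ((-(x i) : ℝ) : MP) + A i j + (x j : MP) := by
    intro i j
    have h1 : ((-(x i) : ℝ) : MP) + A i j + (x j : MP)
        ≤ Finset.univ.sup fun j => ((-(x i) : ℝ) : MP) + A i j + (x j : MP) :=
      Finset.le_sup (f := fun j => ((-(x i) : ℝ) : MP) + A i j + (x j : MP))
        (Finset.mem_univ j)
    exact h1.trans (Finset.le_sup (f := fun i => Finset.univ.sup fun j =>
      ((-(x i) : ℝ) : MP) + A i j + (x j : MP)) (Finset.mem_univ i))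
  rcases mp_cases (Finset.univ.sup fun i => Finset.univ.sup fun j =>
      ((-(x i) : ℝ) : MP) + A i j + (x j : MP)) with hSb | ⟨s, hSe⟩
  · rw [hSb]
    rw [hSb] at hterm
    have hAbot : ∀ i j, A i j = ⊥ := by
      intro i j
      have := hterm i j
      rcases mp_cases (A i j) with h | ⟨a, h⟩
      · exact h
      · rw [h, ← WithBot.coe_add, ← WithBot.coe_add] at this
        simp at this
    have hpow : ∀ m i j, mpPow A (m + 1) i j = ⊥ := by
      intro m i j
      show Finset.univ.sup (fun k => mpPow A m i k + A k j) = ⊥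
      simp [hAbot, WithBot.add_bot]
    apply Finset.sup_le
    intro m hm
    obtain ⟨hm1, _⟩ := Finset.mem_Icc.1 hm
    obtain ⟨m', rfl⟩ := Nat.exists_eq_succ_of_ne_zero (by omega : m ≠ 0)
    have htr0 : mpTr (mpPow A (m' + 1)) = ⊥ := by
      simp [mpTr, hpow]
    rw [htr0, WithBot.map_bot]
  · rw [hSe]
    rw [hSe] at hterm
    have key : ∀ m i j, mpPow A m i j ≤ ((x i + m * s - x j : ℝ) : MP) := by
      intro m
      induction m with
      | zero =>
        intro i j
        by_cases h : i = j
        · subst h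
          show mpId i i ≤ _
          rw [show mpId i i = ((0:ℝ) : MP) from if_pos rfl, WithBot.coe_le_coe]
          push_cast
          linarith
        · show mpId i j ≤ _
          rw [show mpId i j = ⊥ from if_neg h]
          exact bot_le
      | succ m ih =>
        intro i j
        show Finset.univ.sup (fun k => mpPow A m i k + A k j) ≤ _
        apply Finset.sup_le
        intro k _
        rcases mp_cases (A k j) with hA | ⟨a, hA⟩
        · simp [hA, WithBot.add_bot]
        · have ha : -(x k) + a + x j ≤ s := by
            have := hterm k j
            rw [hA, ← WithBot.coe_add, ← WithBot.coe_add, WithBot.coe_le_coe] at this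
            exact this
          rcases mp_cases (mpPow A m i k) with hP | ⟨p, hP⟩
          · simp [hP, WithBot.bot_add]
          · have hp : p ≤ x i + m * s - x k := by
              have := ih i k; rw [hP, WithBot.coe_le_coe] at this; exact this
            rw [hA, hP, ← WithBot.coe_add, WithBot.coe_le_coe]
            push_cast
            linarith
    apply Finset.sup_le
    intro m hm
    obtain ⟨hm1, _⟩ := Finset.mem_Icc.1 hm
    have hmpos : (0 : ℝ) < m := by exact_mod_cast hm1
    have htr : mpTr (mpPow A m) ≤ ((m * s : ℝ) : MP) := by
      apply Finset.sup_le
      intro i _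
      have := key m i i
      have heq : (x i + m * s - x i : ℝ) = (m * s : ℝ) := by ring
      rwa [heq] at this
    rcases mp_cases (mpTr (mpPow A m)) with hT | ⟨t, hT⟩
    · rw [hT, WithBot.map_bot]; exact bot_le
    · rw [hT, WithBot.map_coe, WithBot.coe_le_coe]
      rw [hT, WithBot.coe_le_coe] at htr
      rw [div_le_iff₀ hmpos]
      linarith

/-- Segment bound: the weight of a path of length `t - s` is at most the
corresponding entry of the matrix power. -/
lemma mp_seg {n : ℕ} (B : Fin n → Fin n → MP) (p : ℕ → Fin n) :
    ∀ t s, s ≤ t → (∑ k ∈ Finset.Ico s t, B (p k) (p (k+1))) ≤ mpPow B (t - s) (p s) (p t) := by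
  intro t
  induction t with
  | zero =>
    intro s hs
    interval_cases s
    simp [mpPow, mpId]
  | succ t ih =>
    intro s hs
    by_cases hst : s ≤ t
    · rw [Finset.sum_Ico_succ_top hst]
      have h1 : (∑ k ∈ Finset.Ico s t, B (p k) (p (k+1))) + B (p t) (p (t+1))
          ≤ mpPow B (t - s) (p s) (p t) + B (p t) (p (t+1)) :=
        add_le_add_left (ih s hst) _
      refine h1.trans ?_
      rw [Nat.succ_sub hst]
      exact Finset.le_sup (f := fun k => mpPow B (t - s) (p s) k + B k (p (t+1)))
        (Finset.mem_univ (p t))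
    · have : s = t + 1 := le_antisymm hs (by omega)
      subst this
      simp [mpPow, mpId]

/-- If `X` bounds the weight of every path from `i` to `q` of length `m`,
then it bounds the matrix power entry. -/
lemma mp_pow_le_of_paths {n : ℕ} (B : Fin n → Fin n → MP) (i : Fin n) :
    ∀ (m : ℕ) (q : Fin n) (X : MP),
    (∀ p : ℕ → Fin n, p 0 = i → p m = q →
      (∑ k ∈ Finset.Ico 0 m, B (p k) (p (k+1))) ≤ X) →
    mpPow B m i q ≤ X := by
  intro m
  induction m with
  | zero =>
    intro q X h
    by_cases hiq : i = q
    · subst hiq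
      have := h (fun _ => i) rfl rfl
      simpa [mpPow, mpId] using this
    · show mpId i q ≤ X
      simp [mpId, hiq]
  | succ m ih =>
    intro q X h
    show Finset.univ.sup (fun k => mpPow B m i k + B k q) ≤ X
    apply Finset.sup_le
    intro k _
    rcases mp_cases (B k q) with hBk | ⟨b, hBk⟩
    · simp [hBk, WithBot.add_bot]
    · have hk : mpPow B m i k ≤ X + ((-b : ℝ) : MP) := by
        apply ih
        intro p hp0 hpm
        set p' : ℕ → Fin n := fun j => if j ≤ m then p j else q with hp'
        have hx := h p' (by simp [hp', hp0]) (by simp [hp'])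
        have hsum : (∑ j ∈ Finset.Ico 0 (m+1), B (p' j) (p' (j+1)))
            = (∑ j ∈ Finset.Ico 0 m, B (p j) (p (j+1))) + (b : MP) := by
          rw [Finset.sum_Ico_succ_top (Nat.zero_le m)]
          have e1 : p' m = p m := by simp only [hp']; exact if_pos le_rfl
          have e2 : p' (m + 1) = q := by
            simp only [hp']; exact if_neg (by omega)
          have e3 : ∀ j ∈ Finset.Ico 0 m, B (p' j) (p' (j+1)) = B (p j) (p (j+1)) := by
            intro j hj
            obtain ⟨_, hj2⟩ := Finset.mem_Ico.1 hj
            have ha : p' j = p j := by simp only [hp']; exact if_pos (by omega)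
            have h2 : p' (j+1) = p (j+1) := by simp only [hp']; exact if_pos (by omega)
            rw [ha, h2]
          rw [Finset.sum_congr rfl e3, e1, e2, hpm, hBk]
        rw [hsum] at hx
        exact (mp_shift b _ X).1 hx
      rw [hBk]
      exact (mp_shift b _ X).2 hk

/-- Powers of a matrix whose cycles (of length ≤ n) are nonpositive are bounded
by the Kleene star. -/
lemma mp_pow_le_star {n : ℕ} (B : Fin n → Fin n → MP) (hn : 0 < n)
    (htr : ∀ m, 1 ≤ m → m ≤ n → mpTr (mpPow B m) ≤ 0) :
    ∀ m i q, mpPow B m i q ≤ mpStar B i q := by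
  have hstar : ∀ m i q, m < n → mpPow B m i q ≤ mpStar B i q := by
    intro m i q hm
    exact Finset.le_sup (f := fun k => mpPow B k i q) (Finset.mem_range.2 hm)
  have hcore : ∀ i q, mpPow B n i q ≤ mpStar B i q := by
    intro i q
    apply mp_pow_le_of_paths
    intro p hp0 hpn
    obtain ⟨a, b, hab, hpe⟩ : ∃ a b : Fin (n+1), a < b ∧ p a = p b := by
      obtain ⟨a, b, hne, he⟩ := Fintype.exists_ne_map_eq_of_card_lt
        (fun j : Fin (n+1) => p j.val) (by simp)
      rcases hne.lt_or_gt with hlt | hlt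
      · exact ⟨a, b, hlt, he⟩
      · exact ⟨b, a, hlt, he.symm⟩
    have hst : (a : ℕ) < (b : ℕ) := hab
    have htn : (b : ℕ) ≤ n := Nat.lt_succ_iff.1 b.isLt
    have hsplit : (∑ k ∈ Finset.Ico 0 n, B (p k) (p (k+1)))
        = (∑ k ∈ Finset.Ico 0 (a:ℕ), B (p k) (p (k+1)))
          + ((∑ k ∈ Finset.Ico (a:ℕ) (b:ℕ), B (p k) (p (k+1)))
          + (∑ k ∈ Finset.Ico (b:ℕ) n, B (p k) (p (k+1)))) := by
      rw [Finset.sum_Ico_consecutive _ (Nat.le_of_lt hst) htn,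
        Finset.sum_Ico_consecutive _ (Nat.zero_le _) (le_trans (Nat.le_of_lt hst) htn)]
    rw [hsplit]
    have h1 : (∑ k ∈ Finset.Ico 0 (a:ℕ), B (p k) (p (k+1)))
        ≤ mpPow B (a:ℕ) i (p (a:ℕ)) := by
      have := mp_seg B p (a:ℕ) 0 (Nat.zero_le _)
      rw [Nat.sub_zero, hp0] at this
      exact this
    have h2 : (∑ k ∈ Finset.Ico (a:ℕ) (b:ℕ), B (p k) (p (k+1))) ≤ 0 := by
      have hseg := mp_seg B p (b:ℕ) (a:ℕ) (Nat.le_of_lt hst)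
      have hd : mpPow B ((b:ℕ) - (a:ℕ)) (p (a:ℕ)) (p (b:ℕ)) ≤ mpTr (mpPow B ((b:ℕ) - (a:ℕ))) := by
        rw [← hpe]
        exact Finset.le_sup (f := fun i => mpPow B ((b:ℕ) - (a:ℕ)) i i) (Finset.mem_univ _)
      exact hseg.trans (hd.trans (htr _ (by omega) (by omega)))
    have h3 : (∑ k ∈ Finset.Ico (b:ℕ) n, B (p k) (p (k+1)))
        ≤ mpPow B (n - (b:ℕ)) (p (a:ℕ)) q := by
      have := mp_seg B p n (b:ℕ) htn
      rw [hpn, ← hpe] at this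
      exact this
    have hcomb : (∑ k ∈ Finset.Ico 0 (a:ℕ), B (p k) (p (k+1)))
          + ((∑ k ∈ Finset.Ico (a:ℕ) (b:ℕ), B (p k) (p (k+1)))
          + (∑ k ∈ Finset.Ico (b:ℕ) n, B (p k) (p (k+1))))
        ≤ mpPow B (a:ℕ) i (p (a:ℕ)) + ((0:MP) + mpPow B (n - (b:ℕ)) (p (a:ℕ)) q) :=
      add_le_add h1 (add_le_add h2 h3)
    refine hcomb.trans ?_
    rw [zero_add]
    have hmul : mpPow B (a:ℕ) i (p (a:ℕ)) + mpPow B (n - (b:ℕ)) (p (a:ℕ)) q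
        ≤ mpPow B ((a:ℕ) + (n - (b:ℕ))) i q := by
      rw [mpPow_add]
      exact Finset.le_sup (f := fun k => mpPow B (a:ℕ) i k + mpPow B (n - (b:ℕ)) k q)
        (Finset.mem_univ _)
    exact hmul.trans (hstar _ i q (by omega))
  intro m
  induction m using Nat.strong_induction_on with
  | _ m ihm =>
    intro i q
    by_cases hm : m < n
    · exact hstar m i q hm
    · push_neg at hm
      have hmeq : n + (m - n) = m := by omega
      have : mpPow B m i q = Finset.univ.sup fun k => mpPow B n i k + mpPow B (m - n) k q := by
        conv_lhs => rw [← hmeq, mpPow_add]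
        rfl
      rw [this]
      apply Finset.sup_le
      intro k _
      have h1 : mpPow B n i k + mpPow B (m - n) k q ≤ mpStar B i k + mpPow B (m - n) k q :=
        add_le_add_left (hcore i k) _
      refine h1.trans ?_
      show (Finset.range n).sup (fun c => mpPow B c i k) + mpPow B (m - n) k q ≤ _
      rw [mp_sup_add]
      apply Finset.sup_le
      intro c hc
      have hc' := Finset.mem_range.1 hc
      have h2 : mpPow B c i k + mpPow B (m - n) k q ≤ mpPow B (c + (m - n)) i q := by
        rw [mpPow_add]
        exact Finset.le_sup (f := fun k' => mpPow B c i k' + mpPow B (m - n) k' q)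
          (Finset.mem_univ _)
      exact h2.trans (ihm (c + (m - n)) (by omega) i q)

/-- Extremal property of the spectral radius: x⁻ ⊗ A ⊗ x ≥ λ for all regular x,
with the value λ attained when λ is finite. -/
theorem maxplus_spectral_extremal {n : ℕ} (A : Fin n → Fin n → MP) :
    (∀ x : Fin n → ℝ,
      mpLam A ≤ Finset.univ.sup fun i => Finset.univ.sup fun j =>
        ((-(x i) : ℝ) : MP) + A i j + (x j : MP)) ∧
    (mpLam A ≠ ⊥ → ∃ x : Fin n → ℝ,
      (Finset.univ.sup fun i => Finset.univ.sup fun j =>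
        ((-(x i) : ℝ) : MP) + A i j + (x j : MP)) = mpLam A) := by
  constructor
  · exact mp_part1 A
  · intro hne
    -- λ is finite
    obtain ⟨l, hl⟩ : ∃ l : ℝ, mpLam A = (l : MP) := by
      rcases mp_cases (mpLam A) with h | ⟨l, h⟩
      · exact absurd h hne
      · exact ⟨l, h⟩
    have hn : 0 < n := by
      by_contra hn0
      push_neg at hn0
      interval_cases n
      have : mpLam A = ⊥ := by simp [mpLam]
      exact hne this
    -- The shifted matrix B = A - l
    set B : Fin n → Fin n → MP := fun i j => A i j + ((-l : ℝ) : MP) with hB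
    -- powers of B
    have hpowB : ∀ m i j, mpPow B m i j = mpPow A m i j + (((m : ℝ) * (-l) : ℝ) : MP) := by
      intro m
      induction m with
      | zero =>
        intro i j
        show mpId i j = mpId i j + _
        rw [show (((0:ℕ):ℝ) * (-l) : ℝ) = 0 by push_cast; ring, WithBot.coe_zero, add_zero]
      | succ m ih =>
        intro i j
        show Finset.univ.sup (fun k => mpPow B m i k + B k j)
            = Finset.univ.sup (fun k => mpPow A m i k + A k j) + _
        rw [mp_sup_add]
        apply Finset.sup_congr rfl
        intro k _
        rw [ih i k]
        show mpPow A m i k + _ + (A k j + _) = _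
        rw [add_add_add_comm, ← WithBot.coe_add]
        congr 2
        push_cast
        ring
    -- traces of B are nonpositive
    have htrB : ∀ m, 1 ≤ m → m ≤ n → mpTr (mpPow B m) ≤ 0 := by
      intro m hm1 hmn
      have hle : (mpTr (mpPow A m)).map (fun t => t / (m : ℝ)) ≤ (l : MP) := by
        rw [← hl]
        exact Finset.le_sup (f := fun m => (mpTr (mpPow A m)).map (fun t => t / (m : ℝ)))
          (Finset.mem_Icc.2 ⟨hm1, hmn⟩)
      have hmpos : (0 : ℝ) < m := by exact_mod_cast hm1
      have htrm : mpTr (mpPow B m) = mpTr (mpPow A m) + (((m : ℝ) * (-l) : ℝ) : MP) := by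
        show Finset.univ.sup (fun i => mpPow B m i i) = _
        rw [show mpTr (mpPow A m) = Finset.univ.sup (fun i => mpPow A m i i) from rfl, mp_sup_add]
        apply Finset.sup_congr rfl
        intro i _
        rw [hpowB]
      rw [htrm]
      rcases mp_cases (mpTr (mpPow A m)) with hT | ⟨t, hT⟩
      · simp [hT, WithBot.bot_add]
      · rw [hT, WithBot.map_coe, WithBot.coe_le_coe] at hle
        rw [hT, ← WithBot.coe_add]
        have : t ≤ (m : ℝ) * l := by
          rw [div_le_iff₀ hmpos] at hle
          linarith
        exact_mod_cast (by nlinarith : t + (m : ℝ) * (-l) ≤ (0:ℝ))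
    -- the subeigenvector from the Kleene star
    have hylb : ∀ i, ((0:ℝ) : MP) ≤ Finset.univ.sup fun q => mpStar B i q := by
      intro i
      have h0 : ((0:ℝ) : MP) ≤ mpStar B i i := by
        have : mpPow B 0 i i ≤ mpStar B i i :=
          Finset.le_sup (f := fun k => mpPow B k i i) (Finset.mem_range.2 hn)
        simpa [mpPow, mpId] using this
      exact h0.trans (Finset.le_sup (Finset.mem_univ i))
    have hy : ∀ i, ∃ r : ℝ, (Finset.univ.sup fun q => mpStar B i q) = (r : MP) := by
      intro i
      rcases mp_cases (Finset.univ.sup fun q => mpStar B i q) with h | ⟨r, h⟩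
      · exfalso
        have := hylb i
        rw [h] at this
        simp at this
      · exact ⟨r, h⟩
    choose x hx using hy
    refine ⟨x, le_antisymm ?_ (mp_part1 A x)⟩
    -- upper bound: each term is ≤ l
    rw [hl]
    apply Finset.sup_le
    intro i _
    apply Finset.sup_le
    intro j _
    -- key: B i j + y j ≤ y i
    have hkey : B i j + ((x j : ℝ) : MP) ≤ ((x i : ℝ) : MP) := by
      rw [← hx j, ← hx i, mp_add_sup]
      apply Finset.sup_le
      intro q _
      show B i j + mpStar B j q ≤ _
      rw [show mpStar B j q = (Finset.range n).sup fun k => mpPow B k j q from rfl, mp_add_sup]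
      apply Finset.sup_le
      intro k _
      have h1 : B i j + mpPow B k j q ≤ mpPow B (1 + k) i q := by
        rw [mpPow_add]
        have hB1 : mpPow B 1 i j = B i j := by
          show mpMulM mpId B i j = B i j
          rw [id_mpMulM]
        calc B i j + mpPow B k j q = mpPow B 1 i j + mpPow B k j q := by rw [hB1]
          _ ≤ Finset.univ.sup fun p => mpPow B 1 i p + mpPow B k p q :=
            Finset.le_sup (f := fun p => mpPow B 1 i p + mpPow B k p q) (Finset.mem_univ j)
      exact h1.trans ((mp_pow_le_star B hn htrB (1 + k) i q).trans
        (Finset.le_sup (Finset.mem_univ q)))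
    -- translate back to A
    rcases mp_cases (A i j) with hA | ⟨a, hA⟩
    · simp [hA, WithBot.add_bot, WithBot.bot_add]
    · rw [hB] at hkey
      simp only [hA] at hkey
      rw [hA]
      rw [← WithBot.coe_add, ← WithBot.coe_add, WithBot.coe_le_coe] at hkey
      rw [← WithBot.coe_add, ← WithBot.coe_add, WithBot.coe_le_coe]
      linarith
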